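/- Let (X,T) be a topological dynamical system and let d ≥ 1 be an integer. If x ∈ X^{[d]} is a minimal point of the homeomorphism id × T_*^{[d]} (the map of X^{[d]} fixing the coordinate at ε = (0,…,0) and applying T to every other coordinate), then x is a minimal point of the face group F^{[d]}, i.e. the closure of the F^{[d]}-orbit of x is a minimal closed F^{[d]}-invariant set. -/

import Mathlib

open Set

/-- The group of self-homeomorphisms of a topological space,
with `(f * g) x = f (g x)`. -/
instance homeomorphGroup {X : Type*} [TopologicalSpace X] : Group (X ≃ₜ X) where
  mul f g := g.trans f
  one := Homeomorph.refl X
  inv := Homeomorph.symm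
  mul_assoc f g h := rfl
  one_mul f := by ext x; rfl
  mul_one f := by ext x; rfl
  inv_mul_cancel f := by ext x; exact f.symm_apply_apply x

/-- `n · ε = n₁ε₁ + ⋯ + n_dε_d`. -/
def nDot {d : ℕ} (n : Fin d → ℤ) (ε : Fin d → Bool) : ℤ :=
  ∑ i, if ε i then n i else 0

/-- The vertex `(0,…,0)` of the cube `{0,1}^d`. -/
def v0 (d : ℕ) : Fin d → Bool := fun _ => false

/-- A topological dynamical system `(X,T)` is minimal if every orbit is dense. -/
def IsMinimalTDS {X : Type*} [TopologicalSpace X] (T : X ≃ₜ X) : Prop :=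
  ∀ x : X, Dense (Set.range fun n : ℤ => (T ^ n) x)

/-- The dynamical parallelepiped `Q^{[d]}(X)`: the closure in `X^{[d]} = X^({0,1}^d)`
of the set of points `(T^{n·ε} x)_{ε ∈ {0,1}^d}`, `x ∈ X`, `n ∈ ℤ^d`. -/
def cubeQ {X : Type*} [TopologicalSpace X] (T : X ≃ₜ X) (d : ℕ) :
    Set ((Fin d → Bool) → X) :=
  closure {y | ∃ (x : X) (n : Fin d → ℤ), y = fun ε => (T ^ nDot n ε) x}

/-- The regionally proximal relation of order `k` (for `k = 0` this is all of `X × X`). -/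
def RP {X : Type*} [MetricSpace X] (T : X ≃ₜ X) (k : ℕ) : Set (X × X) :=
  {p | ∀ δ > 0, ∃ (x' y' : X) (n : Fin k → ℤ),
    dist p.1 x' < δ ∧ dist p.2 y' < δ ∧
    ∀ ε : Fin k → Bool, ε ≠ v0 k →
      dist ((T ^ nDot n ε) x') ((T ^ nDot n ε) y') < δ}

/-- A factor map between topological dynamical systems: a continuous surjection
intertwining the actions. -/
def IsFactorMap {X Z : Type*} [TopologicalSpace X] [TopologicalSpace Z]
    (T : X ≃ₜ X) (S : Z ≃ₜ Z) (π : X → Z) : Prop :=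
  Continuous π ∧ Function.Surjective π ∧ ∀ x, π (T x) = S (π x)

/-- The diagonal homeomorphism `T^{[d]} = T × ⋯ × T` of `X^{[d]}`. -/
def diagHomeo {X : Type*} [TopologicalSpace X] (T : X ≃ₜ X) (d : ℕ) :
    ((Fin d → Bool) → X) ≃ₜ ((Fin d → Bool) → X) :=
  Homeomorph.piCongrRight fun _ : Fin d → Bool => T

/-- `w` is a minimal point of the homeomorphism `S`. -/
def IsMinimalPoint {W : Type*} [TopologicalSpace W] (S : W ≃ₜ W) (w : W) : Prop :=
  ∀ y ∈ closure (Set.range fun n : ℤ => (S ^ n) w),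
    closure (Set.range fun n : ℤ => (S ^ n) y)
      = closure (Set.range fun n : ℤ => (S ^ n) w)

/-- The `j`-th face transformation `T_j^{[d]}` of `X^{[d]}`. -/
def faceHomeo {X : Type*} [TopologicalSpace X] {d : ℕ} (T : X ≃ₜ X) (j : Fin d) :
    ((Fin d → Bool) → X) ≃ₜ ((Fin d → Bool) → X) :=
  Homeomorph.piCongrRight fun ε : Fin d → Bool =>
    if ε j then T else Homeomorph.refl X

/-- The face group `F^{[d]}`: the group of homeomorphisms of `X^{[d]}`
generated by the face transformations. -/
def faceGroup {X : Type*} [TopologicalSpace X] (T : X ≃ₜ X) (d : ℕ) :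
    Subgroup (((Fin d → Bool) → X) ≃ₜ ((Fin d → Bool) → X)) :=
  Subgroup.closure (Set.range (faceHomeo (d := d) T))

/-- The orbit of a point under a group of homeomorphisms. -/
def groupOrbit {W : Type*} [TopologicalSpace W] (G : Subgroup (W ≃ₜ W)) (w : W) : Set W :=
  {y | ∃ g ∈ G, g w = y}

/-- The homeomorphism `id × T_*^{[d]}` of `X^{[d]}`, fixing the `(0,…,0)`-coordinate
and applying `T` to every other coordinate. -/
def idFaceHomeo {X : Type*} [TopologicalSpace X] (T : X ≃ₜ X) (d : ℕ) :
    ((Fin d → Bool) → X) ≃ₜ ((Fin d → Bool) → X) :=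
  Homeomorph.piCongrRight fun ε : Fin d → Bool =>
    if ε = v0 d then Homeomorph.refl X else T

namespace Stmt8

/-- Image of a closure under a continuous map from a compact space to a T2 space. -/
theorem image_closure_compact {α β : Type*} [TopologicalSpace α] [CompactSpace α]
    [TopologicalSpace β] [T2Space β] {F : α → β} (hF : Continuous F) (A : Set α) :
    F '' closure A = closure (F '' A) :=
  subset_antisymm (image_closure_subset_closure_image hF)
    (closure_minimal (Set.image_mono (f := F) subset_closure)
      ((isClosed_closure.isCompact.image hF).isClosed))

variable {Z : Type*} [TopologicalSpace Z] [CompactSpace Z] [T2Space Z]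

/-- The closure of a composition-closed family of continuous self-maps is
closed under composition. -/
theorem comp_mem_closure_range {ι : Type*} (g : ι → Z → Z) (hg : ∀ i, Continuous (g i))
    (hcomp : ∀ i j, ∃ k, g i ∘ g j = g k) :
    ∀ p ∈ closure (Set.range g), ∀ q ∈ closure (Set.range g), p ∘ q ∈ closure (Set.range g) := by
  have h1 : ∀ (i), ∀ q ∈ closure (Set.range g), g i ∘ q ∈ closure (Set.range g) := by
    intro i q hq
    have hc : Continuous fun r : Z → Z => g i ∘ r :=
      continuous_pi fun z => (hg i).comp (continuous_apply z)
    have h3 : g i ∘ q ∈ (fun r : Z → Z => g i ∘ r) '' closure (Set.range g) := ⟨q, hq, rfl⟩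
    rw [image_closure_compact hc] at h3
    have h2 : (fun r : Z → Z => g i ∘ r) '' Set.range g ⊆ Set.range g := by
      rintro _ ⟨_, ⟨j, rfl⟩, rfl⟩
      obtain ⟨k, hk⟩ := hcomp i j
      exact ⟨k, hk.symm⟩
    exact closure_mono h2 h3
  intro p hp q hq
  have hc : Continuous fun r : Z → Z => r ∘ q := continuous_pi fun z => continuous_apply (q z)
  have h3 : p ∘ q ∈ (fun r : Z → Z => r ∘ q) '' closure (Set.range g) := ⟨p, hp, rfl⟩
  rw [image_closure_compact hc] at h3
  have h2 : (fun r : Z → Z => r ∘ q) '' Set.range g ⊆ closure (Set.range g) := by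
    rintro _ ⟨_, ⟨i, rfl⟩, rfl⟩
    exact h1 i q hq
  have h4 := closure_mono h2 h3
  rwa [closure_closure] at h4

/-- A closed left ideal of a set of self-maps. -/
def IsIdeal (E S : Set (Z → Z)) : Prop :=
  S ⊆ E ∧ S.Nonempty ∧ IsClosed S ∧ ∀ p ∈ E, ∀ q ∈ S, p ∘ q ∈ S

omit [T2Space Z] in
theorem exists_minimal_ideal (E B : Set (Z → Z)) (hB : IsIdeal E B) :
    ∃ I, IsIdeal E I ∧ I ⊆ B ∧ ∀ S, IsIdeal E S → S ⊆ I → S = I := by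
  have hz : ∀ c ⊆ {S | IsIdeal E S}, IsChain (· ⊆ ·) c → c.Nonempty →
      ∃ lb ∈ {S | IsIdeal E S}, ∀ s ∈ c, lb ⊆ s := by
    intro c hcS hchain hcne
    haveI : Nonempty c := hcne.to_subtype
    refine ⟨⋂₀ c, ⟨?_, ?_, ?_, ?_⟩, fun s hs => sInter_subset_of_mem hs⟩
    · obtain ⟨s, hs⟩ := hcne
      exact (sInter_subset_of_mem hs).trans (hcS hs).1
    · rw [sInter_eq_iInter]
      apply IsCompact.nonempty_iInter_of_directed_nonempty_isCompact_isClosed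
      · intro s t
        rcases hchain.total s.2 t.2 with h | h
        · exact ⟨s, subset_rfl, h⟩
        · exact ⟨t, h, subset_rfl⟩
      · exact fun s => (hcS s.2).2.1
      · exact fun s => (hcS s.2).2.2.1.isCompact
      · exact fun s => (hcS s.2).2.2.1
    · exact isClosed_sInter fun s hs => (hcS hs).2.2.1
    · intro p hp q hq
      rw [mem_sInter] at hq ⊢
      exact fun s hs => (hcS hs).2.2.2 p hp q (hq s hs)
  obtain ⟨I, hIB, hI⟩ := zorn_superset_nonempty {S | IsIdeal E S} hz B hB
  exact ⟨I, hI.prop, hIB, fun S hS hsub => subset_antisymm hsub (hI.2 hS hsub)⟩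

theorem exists_idem (S : Set (Z → Z)) (hne : S.Nonempty) (hcl : IsClosed S)
    (hmul : ∀ p ∈ S, ∀ q ∈ S, p ∘ q ∈ S) : ∃ u ∈ S, u ∘ u = u := by
  haveI : Nonempty S := hne.to_subtype
  letI sg : Semigroup S :=
    { mul := fun a b => ⟨a.1 ∘ b.1, hmul _ a.2 _ b.2⟩
      mul_assoc := fun a b c => Subtype.ext rfl }
  haveI : CompactSpace S := isCompact_iff_compactSpace.mp hcl.isCompact
  have hcont : ∀ r : S, Continuous (· * r) := by
    intro r
    apply Continuous.subtype_mk
    exact continuous_pi fun z => (continuous_apply (r.1 z)).comp continuous_subtype_val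
  obtain ⟨m, hm⟩ := exists_idempotent_of_compact_t2_of_continuous_mul_left hcont
  exact ⟨m.1, m.2, congrArg Subtype.val hm⟩



theorem nDot_v0 {d : ℕ} (n : Fin d → ℤ) : nDot n (v0 d) = 0 := by
  simp [nDot, v0]

theorem nDot_add {d : ℕ} (n m : Fin d → ℤ) (ε : Fin d → Bool) :
    nDot (n + m) ε = nDot n ε + nDot m ε := by
  unfold nDot
  rw [← Finset.sum_add_distrib]
  refine Finset.sum_congr rfl fun i _ => ?_
  by_cases h : ε i <;> simp [h]

theorem nDot_single {d : ℕ} (j : Fin d) (m : ℤ) (ε : Fin d → Bool) :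
    nDot (Pi.single j m) ε = if ε j then m else 0 := by
  unfold nDot
  rw [Finset.sum_eq_single j]
  · by_cases h : ε j <;> simp [h]
  · intro i _ hij
    by_cases h : ε i <;> simp [h, Pi.single_eq_of_ne hij]
  · simp

variable {X : Type*} [TopologicalSpace X]

/-- The face-group element with exponent vector `n`. -/
def Φ (T : X ≃ₜ X) (d : ℕ) (n : Fin d → ℤ) :
    ((Fin d → Bool) → X) ≃ₜ ((Fin d → Bool) → X) :=
  Homeomorph.piCongrRight fun ε : Fin d → Bool => T ^ nDot n ε

theorem Φ_apply (T : X ≃ₜ X) (d : ℕ) (n : Fin d → ℤ) (w : (Fin d → Bool) → X)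
    (ε : Fin d → Bool) : Φ T d n w ε = (T ^ nDot n ε) (w ε) := rfl

theorem Φ_add (T : X ≃ₜ X) (d : ℕ) (n m : Fin d → ℤ) :
    Φ T d (n + m) = Φ T d n * Φ T d m := by
  ext w ε
  show (T ^ nDot (n + m) ε) (w ε) = (T ^ nDot n ε) ((T ^ nDot m ε) (w ε))
  rw [nDot_add, zpow_add]
  rfl

theorem Φ_zero (T : X ≃ₜ X) (d : ℕ) : Φ T d 0 = 1 := by
  ext w ε
  show (T ^ nDot 0 ε) (w ε) = w ε
  have : nDot (0 : Fin d → ℤ) ε = 0 := by simp [nDot]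
  rw [this, zpow_zero]
  rfl

theorem Φ_neg (T : X ≃ₜ X) (d : ℕ) (n : Fin d → ℤ) : Φ T d (-n) = (Φ T d n)⁻¹ := by
  have h : Φ T d (-n) * Φ T d n = 1 := by
    rw [← Φ_add, neg_add_cancel, Φ_zero]
  exact eq_inv_of_mul_eq_one_left h

theorem Φ_zsmul (T : X ≃ₜ X) (d : ℕ) (m : ℤ) (v : Fin d → ℤ) :
    Φ T d (m • v) = Φ T d v ^ m := by
  induction m using Int.induction_on with
  | zero => simpa using Φ_zero T d
  | succ k ih =>
      have : ((k : ℤ) + 1) • v = (k : ℤ) • v + v := by rw [add_smul, one_smul]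
      rw [this, Φ_add, ih, zpow_add, zpow_one]
  | pred k ih =>
      have : (-(k : ℤ) - 1) • v = (-(k : ℤ)) • v + (-v) := by
        rw [sub_smul, one_smul, neg_smul]; ring_nf
      rw [this, Φ_add, ih, Φ_neg, zpow_sub, zpow_one]

theorem Φ_single_one (T : X ≃ₜ X) {d : ℕ} (j : Fin d) :
    Φ T d (Pi.single j 1) = faceHomeo T j := by
  ext w ε
  show (T ^ nDot (Pi.single j 1) ε) (w ε) = (if ε j then T else Homeomorph.refl X) (w ε)
  rw [nDot_single]
  by_cases h : ε j
  · rw [if_pos h, if_pos h, zpow_one]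
  · rw [if_neg h, if_neg h, zpow_zero]
    rfl

theorem Φ_single (T : X ≃ₜ X) {d : ℕ} (j : Fin d) (m : ℤ) :
    Φ T d (Pi.single j m) = faceHomeo T j ^ m := by
  have h : Pi.single j m = (m • Pi.single j (1 : ℤ) : Fin d → ℤ) := by
    funext i
    by_cases h : i = j
    · subst h; simp
    · simp [Pi.single_eq_of_ne h]
  rw [h, Φ_zsmul, Φ_single_one]

theorem Φ_mem_faceGroup (T : X ≃ₜ X) (d : ℕ) (n : Fin d → ℤ) :
    Φ T d n ∈ faceGroup T d := by
  classical
  have key : ∀ (s : Finset (Fin d)) (n : Fin d → ℤ), (∀ j ∉ s, n j = 0) →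
      Φ T d n ∈ faceGroup T d := by
    intro s
    induction s using Finset.induction_on with
    | empty =>
        intro n hn
        have h0 : n = 0 := funext fun j => hn j (by simp)
        rw [h0, Φ_zero]
        exact one_mem _
    | @insert j s hj ih =>
        intro n hn
        have hdec : n = Pi.single j (n j) + Function.update n j 0 := by
          funext i
          by_cases h : i = j
          · subst h; simp
          · simp [Pi.single_eq_of_ne h, Function.update_of_ne h]
        rw [hdec, Φ_add]
        refine mul_mem ?_ (ih _ ?_)
        · rw [Φ_single]
          exact Subgroup.zpow_mem (faceGroup T d) (Subgroup.subset_closure (Set.mem_range_self j)) (n j)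
        · intro i hi
          by_cases h : i = j
          · subst h; simp
          · rw [Function.update_of_ne h]
            exact hn i (by simp [h, hi])
  exact key Finset.univ n (fun j hj => absurd (Finset.mem_univ j) hj)

/-- `σ = id × T_*` as a monoid hom in `T`. -/
def sigmaHom (X : Type*) [TopologicalSpace X] (d : ℕ) :
    (X ≃ₜ X) →* (((Fin d → Bool) → X) ≃ₜ ((Fin d → Bool) → X)) where
  toFun g := Homeomorph.piCongrRight fun ε : Fin d → Bool =>
    if ε = v0 d then Homeomorph.refl X else g
  map_one' := by
    ext w ε
    show (if ε = v0 d then Homeomorph.refl X else 1) (w ε) = w ε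
    by_cases h : ε = v0 d
    · rw [if_pos h]; rfl
    · rw [if_neg h]; rfl
  map_mul' g h := by
    ext w ε
    show (if ε = v0 d then Homeomorph.refl X else g * h) (w ε)
        = (if ε = v0 d then Homeomorph.refl X else g)
            ((if ε = v0 d then Homeomorph.refl X else h) (w ε))
    by_cases hv : ε = v0 d
    · rw [if_pos hv, if_pos hv, if_pos hv]; rfl
    · rw [if_neg hv, if_neg hv, if_neg hv]; rfl

theorem idFaceHomeo_eq (T : X ≃ₜ X) (d : ℕ) : idFaceHomeo T d = sigmaHom X d T := rfl

theorem idFace_zpow_apply (T : X ≃ₜ X) (d : ℕ) (m : ℤ) (w : (Fin d → Bool) → X)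
    (ε : Fin d → Bool) :
    (idFaceHomeo T d ^ m) w ε = if ε = v0 d then w ε else (T ^ m) (w ε) := by
  rw [idFaceHomeo_eq, ← map_zpow]
  show (if ε = v0 d then Homeomorph.refl X else T ^ m) (w ε) = _
  by_cases h : ε = v0 d
  · rw [if_pos h, if_pos h]; rfl
  · rw [if_neg h, if_neg h]

end Stmt8

/-- an `id × T_*^{[d]}`-minimal point of `X^{[d]}` is an
`F^{[d]}`-minimal point. -/
theorem statement8 {X : Type*} [MetricSpace X] [CompactSpace X]
    (T : X ≃ₜ X) (d : ℕ) (hd : 1 ≤ d)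
    (x : (Fin d → Bool) → X)
    (hx : IsMinimalPoint (idFaceHomeo T d) x) :
    ∀ y ∈ closure (groupOrbit (faceGroup T d) x),
      closure (groupOrbit (faceGroup T d) y)
        = closure (groupOrbit (faceGroup T d) x) := by
  classical
  -- Step 0: the face-group orbit of any point is the range of the `Φ` maps.
  have orbitEq : ∀ w : (Fin d → Bool) → X,
      groupOrbit (faceGroup T d) w = Set.range fun n : Fin d → ℤ => Stmt8.Φ T d n w := by
    intro w
    apply subset_antisymm
    · rintro y ⟨g, hg, rfl⟩
      have hex : ∃ n, g = Stmt8.Φ T d n := by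
        refine Subgroup.closure_induction (p := fun g _ => ∃ n, g = Stmt8.Φ T d n)
          ?_ ?_ ?_ ?_ hg
        · rintro g ⟨j, rfl⟩
          exact ⟨Pi.single j 1, (Stmt8.Φ_single_one T j).symm⟩
        · exact ⟨0, (Stmt8.Φ_zero T d).symm⟩
        · rintro a b _ _ ⟨n, rfl⟩ ⟨m, rfl⟩
          exact ⟨n + m, (Stmt8.Φ_add T d n m).symm⟩
        · rintro a _ ⟨n, rfl⟩
          exact ⟨-n, (Stmt8.Φ_neg T d n).symm⟩
      obtain ⟨n, rfl⟩ := hex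
      exact ⟨n, rfl⟩
    · rintro _ ⟨n, rfl⟩
      exact ⟨Stmt8.Φ T d n, Stmt8.Φ_mem_faceGroup T d n, rfl⟩
  -- The two enveloping semigroups.
  set EE : Set (X → X) := closure (Set.range fun m : ℤ => ⇑(T ^ m)) with hEE
  set GG : Set (((Fin d → Bool) → X) → ((Fin d → Bool) → X)) :=
    closure (Set.range fun n : Fin d → ℤ => ⇑(Stmt8.Φ T d n)) with hGG
  have hEmul : ∀ p ∈ EE, ∀ q ∈ EE, p ∘ q ∈ EE := by
    rw [hEE]
    exact Stmt8.comp_mem_closure_range _ (fun m => (T ^ m).continuous)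
      (fun a b => ⟨a + b, by
        funext c
        show (T ^ a) ((T ^ b) c) = (T ^ (a + b)) c
        rw [zpow_add]; rfl⟩)
  have hGmul : ∀ p ∈ GG, ∀ q ∈ GG, p ∘ q ∈ GG := by
    rw [hGG]
    exact Stmt8.comp_mem_closure_range _ (fun n => (Stmt8.Φ T d n).continuous)
      (fun a b => ⟨a + b, by
        funext w
        show (Stmt8.Φ T d a) ((Stmt8.Φ T d b) w) = (Stmt8.Φ T d (a + b)) w
        rw [Stmt8.Φ_add]; rfl⟩)
  have hEEne : (⇑(T ^ (0 : ℤ)) : X → X) ∈ EE := by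
    rw [hEE]; exact subset_closure ⟨0, rfl⟩
  have hEEcl : IsClosed EE := by rw [hEE]; exact isClosed_closure
  have hGGne : (⇑(Stmt8.Φ T d 0) : ((Fin d → Bool) → X) → ((Fin d → Bool) → X)) ∈ GG := by
    rw [hGG]; exact subset_closure ⟨0, rfl⟩
  have hGGcl : IsClosed GG := by rw [hGG]; exact isClosed_closure
  -- structural facts about elements of GG
  have hGv0 : ∀ p ∈ GG, ∀ w : (Fin d → Bool) → X, p w (v0 d) = w (v0 d) := by
    intro p hp w
    rw [hGG] at hp
    have hcl : IsClosed {p : ((Fin d → Bool) → X) → ((Fin d → Bool) → X) |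
        p w (v0 d) = w (v0 d)} :=
      isClosed_eq ((continuous_apply (v0 d)).comp (continuous_apply w)) continuous_const
    refine closure_minimal ?_ hcl hp
    rintro _ ⟨n, rfl⟩
    show Stmt8.Φ T d n w (v0 d) = w (v0 d)
    rw [Stmt8.Φ_apply, Stmt8.nDot_v0, zpow_zero]
    rfl
  have hGcoord : ∀ p ∈ GG, ∀ w w' : (Fin d → Bool) → X, ∀ ε : Fin d → Bool,
      w ε = w' ε → p w ε = p w' ε := by
    intro p hp w w' ε h
    rw [hGG] at hp
    have hcl : IsClosed {p : ((Fin d → Bool) → X) → ((Fin d → Bool) → X) | p w ε = p w' ε} :=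
      isClosed_eq ((continuous_apply ε).comp (continuous_apply w))
        ((continuous_apply ε).comp (continuous_apply w'))
    refine closure_minimal ?_ hcl hp
    rintro _ ⟨n, rfl⟩
    show Stmt8.Φ T d n w ε = Stmt8.Φ T d n w' ε
    rw [Stmt8.Φ_apply, Stmt8.Φ_apply, h]
  have hpcomp : ∀ p ∈ GG, ∀ ε : Fin d → Bool, (fun c : X => p (fun _ => c) ε) ∈ EE := by
    intro p hp ε
    rw [hGG] at hp
    rw [hEE]
    have hc : Continuous fun q : ((Fin d → Bool) → X) → ((Fin d → Bool) → X) =>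
        fun c : X => q (fun _ => c) ε :=
      continuous_pi fun c => (continuous_apply ε).comp (continuous_apply _)
    have h3 : (fun c : X => p (fun _ => c) ε) ∈
        (fun q : ((Fin d → Bool) → X) → ((Fin d → Bool) → X) => fun c : X => q (fun _ => c) ε) ''
          closure (Set.range fun n : Fin d → ℤ => ⇑(Stmt8.Φ T d n)) := ⟨p, hp, rfl⟩
    rw [Stmt8.image_closure_compact hc] at h3
    have himg : (fun q : ((Fin d → Bool) → X) → ((Fin d → Bool) → X) =>
        fun c : X => q (fun _ => c) ε) ''
        (Set.range fun n : Fin d → ℤ => ⇑(Stmt8.Φ T d n)) ⊆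
        Set.range fun m : ℤ => ⇑(T ^ m) := by
      rintro _ ⟨_, ⟨n, rfl⟩, rfl⟩
      exact ⟨nDot n ε, rfl⟩
    exact closure_mono himg h3
  -- description of σ-orbit closures
  have horb : ∀ y : (Fin d → Bool) → X,
      closure (Set.range fun m : ℤ => (idFaceHomeo T d ^ m) y)
        = (fun g : X → X => (fun ε => if ε = v0 d then y ε else g (y ε) :
            (Fin d → Bool) → X)) '' EE := by
    intro y
    rw [hEE]
    have hk : Continuous fun g : X → X => (fun ε => if ε = v0 d then y ε else g (y ε) :
        (Fin d → Bool) → X) := by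
      refine continuous_pi fun ε => ?_
      by_cases h : ε = v0 d
      · simp only [if_pos h]; exact continuous_const
      · simp only [if_neg h]; exact continuous_apply (y ε)
    rw [Stmt8.image_closure_compact hk]
    have hset : ((fun g : X → X => (fun ε => if ε = v0 d then y ε else g (y ε) :
        (Fin d → Bool) → X)) '' (Set.range fun m : ℤ => ⇑(T ^ m)))
        = Set.range fun m : ℤ => (idFaceHomeo T d ^ m) y := by
      ext z
      constructor
      · rintro ⟨g, ⟨m, rfl⟩, rfl⟩
        refine ⟨m, ?_⟩
        funext ε
        show (idFaceHomeo T d ^ m) y ε = if ε = v0 d then y ε else (T ^ m) (y ε)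
        exact Stmt8.idFace_zpow_apply T d m y ε
      · rintro ⟨m, rfl⟩
        refine ⟨⇑(T ^ m), ⟨m, rfl⟩, ?_⟩
        funext ε
        show (if ε = v0 d then y ε else (T ^ m) (y ε)) = (idFaceHomeo T d ^ m) y ε
        exact (Stmt8.idFace_zpow_apply T d m y ε).symm
    rw [hset]
  -- minimal left ideal of EE
  have hEEid : Stmt8.IsIdeal EE EE := ⟨subset_rfl, ⟨_, hEEne⟩, hEEcl, hEmul⟩
  obtain ⟨It, hIt, -, hItmin⟩ := Stmt8.exists_minimal_ideal EE EE hEEid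
  obtain ⟨g₀, hg₀⟩ := hIt.2.1
  -- an idempotent u ∈ It fixing every coordinate x ε, ε ≠ v0
  have hy₀mem : (fun ε => if ε = v0 d then x ε else g₀ (x ε) : (Fin d → Bool) → X) ∈
      closure (Set.range fun m : ℤ => (idFaceHomeo T d ^ m) x) := by
    rw [horb x]
    exact ⟨g₀, hIt.1 hg₀, rfl⟩
  have hxx : x ∈ closure (Set.range fun m : ℤ => (idFaceHomeo T d ^ m) x) :=
    subset_closure ⟨0, by show (idFaceHomeo T d ^ (0 : ℤ)) x = x; rw [zpow_zero]; rfl⟩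
  have hxy₀ : x ∈ closure (Set.range fun m : ℤ =>
      (idFaceHomeo T d ^ m) (fun ε => if ε = v0 d then x ε else g₀ (x ε))) := by
    rw [hx _ hy₀mem]
    exact hxx
  rw [horb _] at hxy₀
  obtain ⟨h₀, hh₀EE, hh₀⟩ := hxy₀
  have hr : ∀ ε : Fin d → Bool, ε ≠ v0 d → (h₀ ∘ g₀) (x ε) = x ε := by
    intro ε hε
    have h1 := congrFun hh₀ ε
    simp only [if_neg hε] at h1
    exact h1
  have hScl : IsClosed {g : X → X | ∀ ε : Fin d → Bool, ε ≠ v0 d → g (x ε) = x ε} := by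
    have hrw : {g : X → X | ∀ ε : Fin d → Bool, ε ≠ v0 d → g (x ε) = x ε}
        = ⋂ (ε : Fin d → Bool), ⋂ (_ : ε ≠ v0 d), {g : X → X | g (x ε) = x ε} := by
      ext g; simp [Set.mem_iInter]
    rw [hrw]
    exact isClosed_iInter fun ε => isClosed_iInter fun _ =>
      isClosed_eq (continuous_apply (x ε)) continuous_const
  obtain ⟨u, hu, huidem⟩ := Stmt8.exists_idem
    (It ∩ {g : X → X | ∀ ε : Fin d → Bool, ε ≠ v0 d → g (x ε) = x ε})
    ⟨h₀ ∘ g₀, hIt.2.2.2 h₀ hh₀EE g₀ hg₀, hr⟩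
    (hIt.2.2.1.inter hScl)
    (by
      rintro p ⟨hpI, hpF⟩ q ⟨hqI, hqF⟩
      refine ⟨hIt.2.2.2 p (hIt.1 hpI) q hqI, fun ε hε => ?_⟩
      show p (q (x ε)) = x ε
      rw [hqF ε hε, hpF ε hε])
  obtain ⟨huIt, hufix⟩ := hu
  have huEE : u ∈ EE := hIt.1 huIt
  -- building blocks of U
  have hQ : ∀ j : Fin d, (fun w : (Fin d → Bool) → X =>
      (fun ε => if ε j then u (w ε) else w ε : (Fin d → Bool) → X)) ∈ GG := by
    intro j
    rw [hGG]
    have hc : Continuous fun g : X → X => (fun w : (Fin d → Bool) → X =>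
        (fun ε => if ε j then g (w ε) else w ε : (Fin d → Bool) → X)) := by
      refine continuous_pi fun w => continuous_pi fun ε => ?_
      by_cases h : ε j
      · simp only [if_pos h]; exact continuous_apply (w ε)
      · simp only [if_neg h]; exact continuous_const
    have hmem : (fun w : (Fin d → Bool) → X =>
        (fun ε => if ε j then u (w ε) else w ε : (Fin d → Bool) → X)) ∈
        (fun g : X → X => (fun w : (Fin d → Bool) → X =>
          (fun ε => if ε j then g (w ε) else w ε : (Fin d → Bool) → X))) '' EE :=
      ⟨u, huEE, rfl⟩
    rw [hEE, Stmt8.image_closure_compact hc] at hmem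
    have himg : (fun g : X → X => (fun w : (Fin d → Bool) → X =>
        (fun ε => if ε j then g (w ε) else w ε : (Fin d → Bool) → X))) ''
        (Set.range fun m : ℤ => ⇑(T ^ m)) ⊆
        Set.range fun n : Fin d → ℤ => ⇑(Stmt8.Φ T d n) := by
      rintro _ ⟨_, ⟨m, rfl⟩, rfl⟩
      refine ⟨Pi.single j m, ?_⟩
      funext w ε
      show Stmt8.Φ T d (Pi.single j m) w ε = if ε j then (T ^ m) (w ε) else w ε
      rw [Stmt8.Φ_apply, Stmt8.nDot_single]
      by_cases h : ε j
      · rw [if_pos h, if_pos h]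
      · rw [if_neg h, if_neg h, zpow_zero]; rfl
    exact closure_mono himg hmem
  have huu : ∀ c : X, u (u c) = u c := fun c => congrFun huidem c
  -- U ∈ GG
  have hUGG : (fun w : (Fin d → Bool) → X =>
      (fun ε => if ε = v0 d then w ε else u (w ε) : (Fin d → Bool) → X)) ∈ GG := by
    have key : ∀ l : List (Fin d), l ≠ [] →
        (fun w : (Fin d → Bool) → X =>
          (fun ε => if ∃ j ∈ l, ε j = true then u (w ε) else w ε : (Fin d → Bool) → X)) ∈ GG := by
      intro l
      induction l with
      | nil => intro h; exact absurd rfl h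
      | cons j l ih =>
          intro _
          by_cases hl : l = []
          · subst hl
            have hrw : (fun w : (Fin d → Bool) → X =>
                (fun ε => if ∃ j' ∈ [j], ε j' = true then u (w ε) else w ε :
                  (Fin d → Bool) → X))
                = (fun w : (Fin d → Bool) → X =>
                  (fun ε => if ε j then u (w ε) else w ε : (Fin d → Bool) → X)) := by
              funext w ε
              by_cases h : ε j = true
              · have hex : ∃ j' ∈ [j], ε j' = true := ⟨j, List.mem_singleton_self j, h⟩
                rw [if_pos hex, if_pos h]
              · have hex : ¬ ∃ j' ∈ [j], ε j' = true := by
                  rintro ⟨j', hj', hj'2⟩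
                  rw [List.mem_singleton] at hj'
                  subst hj'
                  exact h hj'2
                rw [if_neg hex, if_neg h]
            rw [hrw]
            exact hQ j
          · have hcomp := hGmul _ (hQ j) _ (ih hl)
            have hrw : ((fun w : (Fin d → Bool) → X =>
                (fun ε => if ε j then u (w ε) else w ε : (Fin d → Bool) → X)) ∘
                (fun w : (Fin d → Bool) → X =>
                  (fun ε => if ∃ j' ∈ l, ε j' = true then u (w ε) else w ε :
                    (Fin d → Bool) → X)))
                = (fun w : (Fin d → Bool) → X =>
                  (fun ε => if ∃ j' ∈ j :: l, ε j' = true then u (w ε) else w ε :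
                    (Fin d → Bool) → X)) := by
              funext w ε
              simp only [Function.comp_apply]
              by_cases h1 : ε j = true
              · rw [if_pos h1]
                have hex : ∃ j' ∈ j :: l, ε j' = true := ⟨j, List.mem_cons_self, h1⟩
                by_cases h2 : ∃ j' ∈ l, ε j' = true
                · rw [if_pos h2, if_pos hex]
                  exact huu (w ε)
                · rw [if_neg h2, if_pos hex]
              · rw [if_neg h1]
                by_cases h2 : ∃ j' ∈ l, ε j' = true
                · obtain ⟨j', hj', hj'2⟩ := h2
                  have hex : ∃ j' ∈ j :: l, ε j' = true :=
                    ⟨j', List.mem_cons_of_mem j hj', hj'2⟩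
                  rw [if_pos ⟨j', hj', hj'2⟩, if_pos hex]
                · have hex : ¬ ∃ j' ∈ j :: l, ε j' = true := by
                    rintro ⟨j', hj', hj'2⟩
                    rcases List.mem_cons.mp hj' with h | h
                    · subst h; exact h1 hj'2
                    · exact h2 ⟨j', h, hj'2⟩
                  rw [if_neg h2, if_neg hex]
            rw [hrw] at hcomp
            exact hcomp
    have heq : (fun w : (Fin d → Bool) → X =>
        (fun ε => if ∃ j ∈ List.finRange d, ε j = true then u (w ε) else w ε :
          (Fin d → Bool) → X))
        = (fun w : (Fin d → Bool) → X =>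
          (fun ε => if ε = v0 d then w ε else u (w ε) : (Fin d → Bool) → X)) := by
      funext w ε
      by_cases h : ε = v0 d
      · rw [if_pos h, if_neg ?_]
        subst h
        rintro ⟨j, -, hj⟩
        simp [v0] at hj
      · rw [if_neg h, if_pos ?_]
        obtain ⟨a, ha⟩ := Function.ne_iff.mp h
        have ha' : ε a ≠ false := ha
        have ha'' : ε a = true := by cases hb : ε a <;> simp_all
        exact ⟨a, List.mem_finRange a, ha''⟩
    have hne : List.finRange d ≠ [] := by
      intro hnil
      have := List.finRange_eq_nil_iff.mp hnil
      omega
    rw [← heq]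
    exact key _ hne
  set U : ((Fin d → Bool) → X) → ((Fin d → Bool) → X) :=
    fun w : (Fin d → Bool) → X =>
      (fun ε => if ε = v0 d then w ε else u (w ε) : (Fin d → Bool) → X) with hUdef
  have hUx : U x = x := by
    funext ε
    show (if ε = v0 d then x ε else u (x ε)) = x ε
    by_cases h : ε = v0 d
    · rw [if_pos h]
    · rw [if_neg h]; exact hufix ε h
  have hUapp : ∀ (w : (Fin d → Bool) → X) (ε : Fin d → Bool),
      U w ε = if ε = v0 d then w ε else u (w ε) := fun w ε => rfl
  have hUUp : ∀ w : (Fin d → Bool) → X, U (U w) = U w := by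
    intro w
    funext ε
    by_cases h : ε = v0 d
    · rw [hUapp (U w) ε, if_pos h]
    · rw [hUapp (U w) ε, if_neg h, hUapp w ε, if_neg h]
      exact huu (w ε)
  have hUidem : U ∘ U = U := funext hUUp
  -- the key minimality property (P) of U among idempotents of GG
  have hP : ∀ e ∈ GG, e ∘ e = e → e ∘ U = e → U ∘ e = e → e = U := by
    intro e heGG heid heU hUe
    funext w ε
    by_cases hv : ε = v0 d
    · rw [hUapp w ε, if_pos hv]
      subst hv
      exact hGv0 e heGG w
    · -- the ε-component of e
      set et : X → X := fun c => e (fun _ => c) ε with hetdef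
      have hetEE : et ∈ EE := hpcomp e heGG ε
      have hcoorde : ∀ w' : (Fin d → Bool) → X, e w' ε = et (w' ε) :=
        fun w' => hGcoord e heGG w' (fun _ => w' ε) ε rfl
      have hetid : ∀ c : X, et (et c) = et c := by
        intro c
        have hA : e (fun _ => et c) ε = e (e (fun _ => c)) ε :=
          hGcoord e heGG _ _ ε (by rw [hcoorde (fun _ => c)])
        have hB : e (e (fun _ => c)) ε = e (fun _ => c) ε :=
          congrFun (congrFun heid (fun _ => c)) ε
        calc et (et c) = e (fun _ => et c) ε := rfl
          _ = e (e (fun _ => c)) ε := hA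
          _ = e (fun _ => c) ε := hB
          _ = et c := rfl
      have hetu : ∀ c : X, et (u c) = et c := by
        intro c
        have hA : e (fun _ => u c) ε = e (U (fun _ => c)) ε := by
          refine hGcoord e heGG _ _ ε ?_
          rw [hUapp (fun _ => c) ε, if_neg hv]
        have hB : e (U (fun _ => c)) ε = e (fun _ => c) ε :=
          congrFun (congrFun heU (fun _ => c)) ε
        calc et (u c) = e (fun _ => u c) ε := rfl
          _ = e (U (fun _ => c)) ε := hA
          _ = e (fun _ => c) ε := hB
          _ = et c := rfl
      have huet : ∀ c : X, u (et c) = et c := by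
        intro c
        have hB : U (e (fun _ => c)) ε = e (fun _ => c) ε :=
          congrFun (congrFun hUe (fun _ => c)) ε
        rw [hUapp (e (fun _ => c)) ε, if_neg hv] at hB
        exact hB
      have hetIt : et ∈ It := by
        have h5 : et ∘ u = et := funext hetu
        rw [← h5]
        exact hIt.2.2.2 et hetEE u huIt
      -- the closed left ideal EE ∘ et
      have hLid : Stmt8.IsIdeal EE ((fun g : X → X => g ∘ et) '' EE) := by
        refine ⟨?_, ⟨_, ⟨_, hEEne, rfl⟩⟩, ?_, ?_⟩
        · rintro _ ⟨g, hg, rfl⟩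
          exact hEmul g hg et hetEE
        · exact (hEEcl.isCompact.image
            (continuous_pi fun c => continuous_apply (et c))).isClosed
        · rintro p hp _ ⟨g, hg, rfl⟩
          exact ⟨p ∘ g, hEmul p hp g hg, rfl⟩
      have hLsub : (fun g : X → X => g ∘ et) '' EE ⊆ It := by
        rintro _ ⟨g, hg, rfl⟩
        exact hIt.2.2.2 g hg et hetIt
      have hLeq : (fun g : X → X => g ∘ et) '' EE = It := hItmin _ hLid hLsub
      have huL : u ∈ (fun g : X → X => g ∘ et) '' EE := by rw [hLeq]; exact huIt
      obtain ⟨s, hsEE, hs⟩ := huL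
      have hue : ∀ c : X, u (et c) = u c := by
        intro c
        have h6 : u (et c) = s (et (et c)) := by rw [← hs]; rfl
        rw [hetid c] at h6
        have h7 : s (et c) = u c := by rw [← hs]; rfl
        rw [h6, h7]
      have hetu' : ∀ c : X, et c = u c := fun c => by rw [← huet c, hue c]
      rw [hcoorde w, hetu' (w ε), hUapp w ε, if_neg hv]
  -- minimal left ideal of GG containing U
  have mkId : ∀ r' : ((Fin d → Bool) → X) → ((Fin d → Bool) → X), r' ∈ GG →
      Stmt8.IsIdeal GG ((fun p => p ∘ r') '' GG) := by
    intro r' hr'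
    refine ⟨?_, ⟨_, ⟨_, hGGne, rfl⟩⟩, ?_, ?_⟩
    · rintro _ ⟨p, hp, rfl⟩
      exact hGmul p hp r' hr'
    · exact (hGGcl.isCompact.image
        (continuous_pi fun w => continuous_apply (r' w))).isClosed
    · rintro p hp _ ⟨q, hq, rfl⟩
      exact ⟨p ∘ q, hGmul p hp q hq, rfl⟩
  obtain ⟨I, hI, hIGU, hImin⟩ := Stmt8.exists_minimal_ideal GG _ (mkId U hUGG)
  obtain ⟨e, heI, heid⟩ := Stmt8.exists_idem I hI.2.1 hI.2.2.1
    (fun p hp q hq => hI.2.2.2 p (hI.1 hp) q hq)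
  have heU : e ∘ U = e := by
    obtain ⟨q₁, hq₁GG, hq₁⟩ := hIGU heI
    rw [← hq₁]
    funext w
    show q₁ (U (U w)) = q₁ (U w)
    rw [hUUp w]
  have hf : U ∘ e ∈ GG := hGmul U hUGG e (hI.1 heI)
  have heUp : ∀ w : (Fin d → Bool) → X, e (U w) = e w := fun w => congrFun heU w
  have heidp : ∀ w : (Fin d → Bool) → X, e (e w) = e w := fun w => congrFun heid w
  have hfid : (U ∘ e) ∘ (U ∘ e) = U ∘ e := by
    funext w
    show U (e (U (e w))) = U (e w)
    rw [heUp (e w), heidp w]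
  have hfU : (U ∘ e) ∘ U = U ∘ e := by
    funext w
    show U (e (U w)) = U (e w)
    rw [heUp w]
  have hUf : U ∘ (U ∘ e) = U ∘ e := by
    funext w
    show U (U (e w)) = U (e w)
    exact hUUp (e w)
  have hfeq : U ∘ e = U := hP (U ∘ e) hf hfid hfU hUf
  have hUI : U ∈ I := by
    have h8 : U ∘ e ∈ I := hI.2.2.2 U hUGG e heI
    rwa [hfeq] at h8
  -- orbit closures via evaluation
  have hGx : ∀ w : (Fin d → Bool) → X,
      closure (Set.range fun n : Fin d → ℤ => Stmt8.Φ T d n w)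
        = (fun p : ((Fin d → Bool) → X) → ((Fin d → Bool) → X) => p w) '' GG := by
    intro w
    rw [hGG, Stmt8.image_closure_compact (continuous_apply w), ← Set.range_comp]
    rfl
  have hIx : closure (Set.range fun n : Fin d → ℤ => Stmt8.Φ T d n x)
      = (fun p : ((Fin d → Bool) → X) → ((Fin d → Bool) → X) => p x) '' I := by
    rw [hGx x]
    apply subset_antisymm
    · rintro _ ⟨p, hp, rfl⟩
      refine ⟨p ∘ U, hI.2.2.2 p hp U hUI, ?_⟩
      show p (U x) = p x
      rw [hUx]
    · rintro _ ⟨p, hp, rfl⟩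
      exact ⟨p, hI.1 hp, rfl⟩
  -- conclusion
  intro y hy
  rw [orbitEq x] at hy
  rw [hIx] at hy
  obtain ⟨r, hrI, hrx0⟩ := hy
  have hrx : r x = y := hrx0
  have hrGG : r ∈ GG := hI.1 hrI
  have hLreq : (fun p : ((Fin d → Bool) → X) → ((Fin d → Bool) → X) => p ∘ r) '' GG = I := by
    refine hImin _ (mkId r hrGG) ?_
    rintro _ ⟨p, hp, rfl⟩
    exact hI.2.2.2 p hp r hrI
  rw [orbitEq y, orbitEq x, hGx y, hIx]
  apply subset_antisymm
  · rintro _ ⟨p, hp, rfl⟩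
    refine ⟨p ∘ r, hI.2.2.2 p hp r hrI, ?_⟩
    show p (r x) = p y
    rw [hrx]
  · rintro _ ⟨q, hqI, rfl⟩
    rw [← hLreq] at hqI
    obtain ⟨p, hp, rfl⟩ := hqI
    refine ⟨p, hp, ?_⟩
    show p y = p (r x)
    rw [hrx]
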